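/- Let 𝓤 be a quasi-definite normalized vector of linear functionals (so 𝓤(𝓟₀) = I₂) with moments 𝓤ₙ = 𝓤(x^{2n}𝓟₀), and let 𝓕(z) = Σ_{n≥0} 𝓤ₙ / z^{n+1} be the generalized Markov function (convergent for |z| > R for some R). If the moments satisfy d𝓤ₙ/dt = 𝓤ₙ₊₁ − 𝓤ₙ·𝓤₁ for all n, then 𝓕 satisfies the Riccati-type differential equation d𝓕(z)/dt = 𝓕(z)·(z·I₂ − 𝓤₁) − I₂ for all |z| > R. -/

import Mathlib

/-- If the moments satisfy `𝓤̇ₙ = 𝓤ₙ₊₁ − 𝓤ₙ𝓤₁`, then the generalized Markov function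
`𝓕(z) = Σ 𝓤ₙ/zⁿ⁺¹` satisfies `𝓕̇(z) = 𝓕(z)(zI − 𝓤₁) − I` for `|z| > R`. -/
theorem stmt_3 (U : ℕ → ℝ → Matrix (Fin 2) (Fin 2) ℂ) (K R : ℝ)
    (hU0 : ∀ t, U 0 t = 1)
    (hbound : ∀ (n : ℕ) (t : ℝ) (i j : Fin 2), ‖U n t i j‖ ≤ K * R ^ n)
    (hderiv : ∀ (n : ℕ) (t : ℝ) (i j : Fin 2),
      HasDerivAt (fun s => U n s i j) ((U (n + 1) t - U n t * U 1 t) i j) t) :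
    ∀ (t : ℝ) (z : ℂ), R < ‖z‖ → ∀ i j : Fin 2,
      HasDerivAt (fun s => ∑' n : ℕ, U n s i j / z ^ (n + 1))
        (((Matrix.of fun i j : Fin 2 => ∑' n : ℕ, U n t i j / z ^ (n + 1)) *
            (z • (1 : Matrix (Fin 2) (Fin 2) ℂ) - U 1 t) -
          (1 : Matrix (Fin 2) (Fin 2) ℂ)) i j) t := by
  intro t z hz i j
  have hK : (1:ℝ) ≤ K := by
    have h := hbound 0 0 0 0
    rw [hU0] at h
    simpa [Matrix.one_apply] using h
  have hK0 : (0:ℝ) < K := lt_of_lt_of_le one_pos hK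
  have hR : 0 ≤ R := by
    have h1 := hbound 1 0 0 0
    have h0 : (0:ℝ) ≤ K * R ^ 1 := le_trans (norm_nonneg _) h1
    nlinarith
  set a := ‖z‖ with ha
  have ha0 : 0 < a := lt_of_le_of_lt hR hz
  have hzne : z ≠ 0 := norm_pos_iff.mp ha0
  have hq0 : 0 ≤ R / a := div_nonneg hR ha0.le
  have hq1 : R / a < 1 := (div_lt_one ha0).mpr hz
  -- helper summability lemma
  have key : ∀ (C : ℝ) (g : ℕ → ℂ), (∀ n, ‖g n‖ ≤ C * R ^ n) →
      Summable (fun n : ℕ => g n / z ^ (n+1)) := by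
    intro C g hg
    have hC : 0 ≤ C := by
      have := le_trans (norm_nonneg (g 0)) (hg 0); simpa using this
    apply Summable.of_norm_bounded (g := fun n => (C / a) * (R / a) ^ n)
      ((summable_geometric_of_lt_one hq0 hq1).mul_left _)
    intro n
    have h1 : ‖g n / z ^ (n+1)‖ = ‖g n‖ / a ^ (n+1) := by
      simp [norm_div, norm_pow, ha]
    rw [h1]
    have h2 : ‖g n‖ / a ^ (n+1) ≤ C * R ^ n / a ^ (n+1) := by
      gcongr
      exact hg n
    refine h2.trans (le_of_eq ?_)
    rw [div_pow, div_mul_div_comm, pow_succ]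
    ring_nf
  -- bounds for entries of products
  have hmul : ∀ (n : ℕ) (s : ℝ) (i j : Fin 2),
      ‖(U n s * U 1 s) i j‖ ≤ (2 * K^2 * R) * R ^ n := by
    intro n s i j
    rw [Matrix.mul_apply, Fin.sum_univ_two]
    calc ‖U n s i 0 * U 1 s 0 j + U n s i 1 * U 1 s 1 j‖
        ≤ ‖U n s i 0 * U 1 s 0 j‖ + ‖U n s i 1 * U 1 s 1 j‖ :=
          norm_add_le _ _
      _ ≤ (K * R ^ n) * (K * R ^ 1) + (K * R ^ n) * (K * R ^ 1) := by
          rw [norm_mul, norm_mul]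
          gcongr <;> first
            | exact hbound _ _ _ _
            | exact norm_nonneg _
      _ = (2 * K^2 * R) * R ^ n := by ring
  have hdbound : ∀ (n : ℕ) (s : ℝ) (i j : Fin 2),
      ‖(U (n+1) s - U n s * U 1 s) i j‖ ≤ (K * R + 2 * K^2 * R) * R ^ n := by
    intro n s i j
    rw [Matrix.sub_apply]
    calc ‖U (n+1) s i j - (U n s * U 1 s) i j‖
        ≤ ‖U (n+1) s i j‖ + ‖(U n s * U 1 s) i j‖ :=
          norm_sub_le _ _
      _ ≤ K * R ^ (n+1) + (2 * K^2 * R) * R ^ n := by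
          gcongr
          · exact hbound _ _ _ _
          · exact hmul _ _ _ _
      _ = (K * R + 2 * K^2 * R) * R ^ n := by ring
  -- the derivative via term-by-term differentiation
  have main : HasDerivAt (fun s => ∑' n : ℕ, U n s i j / z ^ (n + 1))
      (∑' n : ℕ, ((U (n+1) t - U n t * U 1 t) i j) / z ^ (n+1)) t := by
    apply hasDerivAt_tsum
      (u := fun n => ((K * R + 2 * K^2 * R) / a) * (R / a) ^ n)
      ((summable_geometric_of_lt_one hq0 hq1).mul_left _)
      (g' := fun n s => ((U (n+1) s - U n s * U 1 s) i j) / z ^ (n+1))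
    · intro n s
      exact (hderiv n s i j).div_const _
    · intro n s
      have h1 : ‖((U (n+1) s - U n s * U 1 s) i j) / z ^ (n+1)‖
          = ‖(U (n+1) s - U n s * U 1 s) i j‖ / a ^ (n+1) := by
        simp [norm_div, norm_pow, ha]
      rw [h1]
      have h2 : ‖(U (n+1) s - U n s * U 1 s) i j‖ / a ^ (n+1)
          ≤ (K * R + 2 * K^2 * R) * R ^ n / a ^ (n+1) := by
        gcongr
        exact hdbound n s i j
      refine h2.trans (le_of_eq ?_)
      rw [div_pow, div_mul_div_comm, pow_succ]
      ring_nf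
    · exact key K (fun n => U n t i j) (fun n => hbound n t i j)
  -- now rewrite the sum of derivatives
  convert main using 1
  -- summability facts at t
  have hs1 : Summable (fun n : ℕ => U (n+1) t i j / z ^ (n+1)) :=
    key (K * R) (fun n => U (n+1) t i j) (fun n => by
      have := hbound (n+1) t i j
      calc ‖U (n+1) t i j‖ ≤ K * R ^ (n+1) := this
        _ = (K * R) * R ^ n := by ring)
  have hs2 : ∀ k : Fin 2, Summable (fun n : ℕ => U n t i k / z ^ (n+1)) :=
    fun k => key K (fun n => U n t i k) (fun n => hbound n t i k)
  have hs3 : Summable (fun n : ℕ => ((U n t * U 1 t) i j) / z ^ (n+1)) :=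
    key (2 * K^2 * R) (fun n => (U n t * U 1 t) i j) (fun n => hmul n t i j)
  have hsub : (∑' n : ℕ, ((U (n+1) t - U n t * U 1 t) i j) / z ^ (n+1))
      = (∑' n : ℕ, U (n+1) t i j / z ^ (n+1)) - ∑' n : ℕ, ((U n t * U 1 t) i j) / z ^ (n+1) := by
    rw [← hs1.tsum_sub hs3]
    congr 1
    funext n
    rw [Matrix.sub_apply, sub_div]
  -- shift identity
  have hshift : (∑' n : ℕ, U (n+1) t i j / z ^ (n+1))
      = z * (∑' n : ℕ, U n t i j / z ^ (n+1)) - (1 : Matrix (Fin 2) (Fin 2) ℂ) i j := by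
    have hfull := hs2 j
    have h0 : (∑' n : ℕ, U n t i j / z ^ (n+1))
        = U 0 t i j / z ^ 1 + ∑' n : ℕ, U (n+1) t i j / z ^ (n+2) := by
      rw [hfull.tsum_eq_zero_add]
    have h1 : (∑' n : ℕ, U (n+1) t i j / z ^ (n+1))
        = z * ∑' n : ℕ, U (n+1) t i j / z ^ (n+2) := by
      rw [← tsum_mul_left]
      congr 1
      funext n
      rw [pow_succ]
      field_simp
      ring
    rw [h1, h0]
    rw [hU0]
    field_simp
    ring
  -- product identity
  have hprod : (∑' n : ℕ, ((U n t * U 1 t) i j) / z ^ (n+1))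
      = ((Matrix.of fun i j : Fin 2 => ∑' n : ℕ, U n t i j / z ^ (n + 1)) * U 1 t) i j := by
    rw [Matrix.mul_apply, Fin.sum_univ_two]
    simp only [Matrix.of_apply]
    rw [← tsum_mul_right, ← tsum_mul_right, ← Summable.tsum_add ((hs2 0).mul_right _) ((hs2 1).mul_right _)]
    congr 1
    funext n
    rw [Matrix.mul_apply, Fin.sum_univ_two, add_div]
    ring
  rw [hsub, hshift, hprod]
  simp only [Matrix.sub_apply, Matrix.mul_sub, Matrix.mul_apply, Matrix.smul_apply,
    Matrix.one_apply, Fin.sum_univ_two, Matrix.of_apply, smul_eq_mul]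
  fin_cases i <;> fin_cases j <;> simp <;> ring
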